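/- The irreversibility cost function is symmetric: for the universal reversible Turing machine, E(x,y) = E(y,x) for all strings x, y, up to an additive constant independent of x and y. -/

import Mathlib

/-- A (possibly partial) machine mapping a pair (data, program) of binary
strings to a pair (data, garbage). -/
abbrev Machine := List Bool × List Bool → Option (List Bool × List Bool)

/-- A machine is reversible if its input can always be deduced from its
output: no two inputs yield the same (defined) output. -/
def Reversible (R : Machine) : Prop :=
  ∀ a b o, R a = some o → R b = some o → a = b

/-- The irreversibility cost `E_R(x,y)`: the minimal total length `|p| + |q|`
of an auxiliary program `p` and garbage `q` with `R⟨x,p⟩ = ⟨y,q⟩`. -/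
noncomputable def costE (R : Machine) (x y : List Bool) : ℕ∞ :=
  ⨅ (p : List Bool) (q : List Bool) (_ : R (x, p) = some (y, q)),
    ((p.length + q.length : ℕ) : ℕ∞)

open Classical in
/-- The inverse machine of `UR`. -/
noncomputable def invM (UR : Machine) : Machine :=
  fun o => if h : ∃ a, UR a = some o then some h.choose else none

lemma invM_spec (UR : Machine) (hrev : Reversible UR) {a o}
    (ha : UR a = some o) : invM UR o = some a := by
  have h : ∃ a', UR a' = some o := ⟨a, ha⟩
  simp only [invM, dif_pos h]
  exact congrArg some (hrev h.choose a o h.choose_spec ha)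

lemma invM_rev (UR : Machine) : Reversible (invM UR) := by
  intro a b o ha hb
  simp only [invM] at ha hb
  split_ifs at ha hb with h1 h2
  have h1s := h1.choose_spec
  have h2s := h2.choose_spec
  rw [Option.some_inj.mp ha] at h1s
  rw [Option.some_inj.mp hb] at h2s
  rw [h1s] at h2s
  exact Option.some_inj.mp h2s

lemma costE_inv_le (UR : Machine) (hrev : Reversible UR) (x y : List Bool) :
    costE (invM UR) y x ≤ costE UR x y := by
  refine le_iInf fun p => le_iInf fun q => le_iInf fun hpq => ?_
  refine iInf_le_of_le q (iInf_le_of_le p (iInf_le_of_le ?_ ?_))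
  · exact invM_spec UR hrev hpq
  · norm_cast
    omega

theorem costE_symmetric (UR : Machine) (hrev : Reversible UR)
    (huniv : ∀ R : Machine, Reversible R →
      ∃ cR : ℕ, ∀ x y, costE UR x y ≤ costE R x y + cR) :
    ∃ c : ℕ, ∀ x y : List Bool,
      costE UR x y ≤ costE UR y x + c ∧ costE UR y x ≤ costE UR x y + c := by
  obtain ⟨c, hc⟩ := huniv (invM UR) (invM_rev UR)
  refine ⟨c, fun x y => ?_⟩
  constructor
  · exact (hc x y).trans (add_le_add_left (costE_inv_le UR hrev y x) _)
  · exact (hc y x).trans (add_le_add_left (costE_inv_le UR hrev x y) _)
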